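/- For every q > 1, every constant C > 0 and every α ∈ (0,1), the series Σ_{i=2}^∞ (1/(i·(log i)^q)) · exp( −C · Φ⁻¹( α/(ζ_l(q)·i·(log i)^q) ) ) · log(log i) diverges to +∞, where ζ_l(q) = Σ_{i=2}^∞ 1/(i·(log i)^q). -/

import Mathlib

open MeasureTheory ProbabilityTheory Filter

/-- The standard normal CDF `Φ`. -/
noncomputable def stdNormalCDF (x : ℝ) : ℝ :=
  (ProbabilityTheory.gaussianReal 0 1 (Set.Iic x)).toReal

/-- The inverse `Φ⁻¹` of the standard normal CDF (on `(0,1)`). -/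
noncomputable def stdNormalQuantile : ℝ → ℝ :=
  Function.invFun stdNormalCDF

/-- `ζ_l(q) = ∑_{i=2}^∞ 1/(i (log i)^q)`. -/
noncomputable def zetaLog (q : ℝ) : ℝ :=
  ∑' i : ℕ, 1 / (((i : ℝ) + 2) * Real.log ((i : ℝ) + 2) ^ q)

lemma stdNormalCDF_eq_cdf (x : ℝ) : stdNormalCDF x = cdf (gaussianReal 0 1) x :=
  (cdf_eq_real _ x).symm

lemma gaussian_meas_ne_top (s : Set ℝ) : gaussianReal 0 1 s ≠ ⊤ :=
  (measure_lt_top _ _).ne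

lemma gaussian_Ioc_pos {x y : ℝ} (h : x < y) : 0 < gaussianReal 0 1 (Set.Ioc x y) := by
  rcases eq_or_lt_of_le (zero_le : 0 ≤ gaussianReal 0 1 (Set.Ioc x y)) with h0 | h0
  · exfalso
    have hac := gaussianReal_absolutelyContinuous' 0 (v := 1) one_ne_zero
    have : (volume : Measure ℝ) (Set.Ioc x y) = 0 := hac h0.symm
    rw [Real.volume_Ioc] at this
    simp only [ENNReal.ofReal_eq_zero] at this
    linarith
  · exact h0

lemma stdNormalCDF_strictMono : StrictMono stdNormalCDF := by
  intro x y h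
  have hsplit : gaussianReal 0 1 (Set.Iic y)
      = gaussianReal 0 1 (Set.Iic x) + gaussianReal 0 1 (Set.Ioc x y) := by
    rw [← measure_union (Set.Iic_disjoint_Ioc le_rfl) measurableSet_Ioc,
      Set.Iic_union_Ioc_eq_Iic h.le]
  unfold stdNormalCDF
  rw [hsplit, ENNReal.toReal_add (gaussian_meas_ne_top _) (gaussian_meas_ne_top _)]
  have : 0 < (gaussianReal 0 1 (Set.Ioc x y)).toReal :=
    ENNReal.toReal_pos (gaussian_Ioc_pos h).ne' (gaussian_meas_ne_top _)
  linarith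

lemma stdNormalCDF_mono : Monotone stdNormalCDF := stdNormalCDF_strictMono.monotone

lemma gaussianPDF_le (x : ℝ) :
    gaussianPDF 0 1 x ≤ ENNReal.ofReal (Real.sqrt (2 * Real.pi))⁻¹ := by
  rw [gaussianPDF]
  refine ENNReal.ofReal_le_ofReal ?_
  unfold gaussianPDFReal
  simp only [NNReal.coe_one, mul_one, sub_zero]
  calc (Real.sqrt (2 * Real.pi))⁻¹ * Real.exp (-x ^ 2 / 2)
      ≤ (Real.sqrt (2 * Real.pi))⁻¹ * 1 := by
        refine mul_le_mul_of_nonneg_left ?_ (by positivity)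
        rw [← Real.exp_zero]
        exact Real.exp_le_exp.2 (by nlinarith [sq_nonneg x])
    _ = _ := mul_one _

lemma stdNormalCDF_sub_le {x y : ℝ} (h : x ≤ y) :
    stdNormalCDF y - stdNormalCDF x ≤ (Real.sqrt (2 * Real.pi))⁻¹ * (y - x) := by
  have hsplit : gaussianReal 0 1 (Set.Iic y)
      = gaussianReal 0 1 (Set.Iic x) + gaussianReal 0 1 (Set.Ioc x y) := by
    rw [← measure_union (Set.Iic_disjoint_Ioc le_rfl) measurableSet_Ioc,
      Set.Iic_union_Ioc_eq_Iic h]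
  unfold stdNormalCDF
  rw [hsplit, ENNReal.toReal_add (gaussian_meas_ne_top _) (gaussian_meas_ne_top _)]
  have hle : gaussianReal 0 1 (Set.Ioc x y)
      ≤ ENNReal.ofReal ((Real.sqrt (2 * Real.pi))⁻¹ * (y - x)) := by
    rw [gaussianReal_of_var_ne_zero 0 one_ne_zero, withDensity_apply _ measurableSet_Ioc]
    calc ∫⁻ t in Set.Ioc x y, gaussianPDF 0 1 t
        ≤ ∫⁻ _ in Set.Ioc x y, ENNReal.ofReal (Real.sqrt (2 * Real.pi))⁻¹ :=
          setLIntegral_mono' measurableSet_Ioc fun t _ => gaussianPDF_le t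
      _ = ENNReal.ofReal (Real.sqrt (2 * Real.pi))⁻¹ * volume (Set.Ioc x y) := by
          rw [setLIntegral_const]
      _ = _ := by
          rw [Real.volume_Ioc, ← ENNReal.ofReal_mul (inv_nonneg.2 (Real.sqrt_nonneg _))]
  have := ENNReal.toReal_le_of_le_ofReal (mul_nonneg (inv_nonneg.2 (Real.sqrt_nonneg _)) (sub_nonneg.2 h)) hle
  linarith

lemma stdNormalCDF_continuous : Continuous stdNormalCDF := by
  have : LipschitzWith ⟨(Real.sqrt (2 * Real.pi))⁻¹, inv_nonneg.2 (Real.sqrt_nonneg _)⟩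
      stdNormalCDF := by
    refine LipschitzWith.of_dist_le_mul fun a b => ?_
    rcases le_total a b with h | h
    · rw [Real.dist_eq, Real.dist_eq, abs_of_nonpos (by
        simpa using stdNormalCDF_mono h), abs_of_nonpos (by linarith)]
      have := stdNormalCDF_sub_le h
      show _ ≤ (Real.sqrt (2 * Real.pi))⁻¹ * _
      linarith
    · rw [Real.dist_eq, Real.dist_eq, abs_of_nonneg (by
        simpa [sub_nonneg] using stdNormalCDF_mono h), abs_of_nonneg (by linarith)]
      have := stdNormalCDF_sub_le h
      show _ ≤ (Real.sqrt (2 * Real.pi))⁻¹ * _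
      linarith
  exact this.continuous

lemma stdNormalCDF_tendsto_atBot : Tendsto stdNormalCDF atBot (nhds 0) := by
  have h := tendsto_cdf_atBot (gaussianReal 0 1)
  exact h.congr fun x => (stdNormalCDF_eq_cdf x).symm

lemma stdNormalCDF_tendsto_atTop : Tendsto stdNormalCDF atTop (nhds 1) := by
  have h := tendsto_cdf_atTop (gaussianReal 0 1)
  exact h.congr fun x => (stdNormalCDF_eq_cdf x).symm

lemma stdNormalQuantile_le {y t : ℝ} (hy : 0 < y) (h : y ≤ stdNormalCDF t) :
    stdNormalQuantile y ≤ t := by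
  obtain ⟨A, hA⟩ : ∃ A, stdNormalCDF A < y := by
    have := stdNormalCDF_tendsto_atBot.eventually (gt_mem_nhds hy)
    exact this.exists
  set A' := min A t with hA'
  have hA'le : stdNormalCDF A' < y := lt_of_le_of_lt (stdNormalCDF_mono (min_le_left _ _)) hA
  have hsub : Set.Icc (stdNormalCDF A') (stdNormalCDF t) ⊆ stdNormalCDF '' Set.Icc A' t :=
    intermediate_value_Icc (min_le_right _ _) stdNormalCDF_continuous.continuousOn
  obtain ⟨x, hx, hxy⟩ := hsub ⟨hA'le.le, h⟩
  have : stdNormalQuantile y = x := by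
    rw [← hxy]
    exact Function.leftInverse_invFun stdNormalCDF_strictMono.injective x
  rw [this]
  exact hx.2

lemma stdNormalCDF_neg_ge {t : ℝ} (ht : 0 ≤ t) :
    (Real.sqrt (2 * Real.pi))⁻¹ * Real.exp (-(t + 1) ^ 2 / 2) ≤ stdNormalCDF (-t) := by
  set K : ℝ := (Real.sqrt (2 * Real.pi))⁻¹ with hK
  set c : ℝ := K * Real.exp (-(t + 1) ^ 2 / 2) with hc
  have hmeas : (gaussianReal 0 1 (Set.Ioc (-t - 1) (-t))).toReal
      = ∫ x in Set.Ioc (-t - 1) (-t), gaussianPDFReal 0 1 x := by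
    rw [gaussianReal_apply_eq_integral 0 one_ne_zero,
      ENNReal.toReal_ofReal (setIntegral_nonneg measurableSet_Ioc
        fun x _ => gaussianPDFReal_nonneg 0 1 x)]
  have hint : c ≤ ∫ x in Set.Ioc (-t - 1) (-t), gaussianPDFReal 0 1 x := by
    have h1 : c * (volume (Set.Ioc (-t - 1) (-t))).toReal
        ≤ ∫ x in Set.Ioc (-t - 1) (-t), gaussianPDFReal 0 1 x := by
      refine setIntegral_ge_of_const_le_real measurableSet_Ioc (by
        rw [Real.volume_Ioc]; exact ENNReal.ofReal_ne_top) (fun x hx => ?_)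
        ((integrable_gaussianPDFReal 0 1).integrableOn)
      unfold gaussianPDFReal
      simp only [NNReal.coe_one, mul_one, sub_zero, hc, hK]
      refine mul_le_mul_of_nonneg_left ?_ (inv_nonneg.2 (Real.sqrt_nonneg _))
      refine Real.exp_le_exp.2 ?_
      have h1 : -(t + 1) < x := by linarith [hx.1]
      have h2 : x ≤ t + 1 := by linarith [hx.2, ht]
      nlinarith [mul_nonneg (by linarith : (0:ℝ) ≤ t + 1 + x) (by linarith : (0:ℝ) ≤ t + 1 - x)]
    have hv : (volume (Set.Ioc (-t - 1) (-t))).toReal = 1 := by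
      rw [Real.volume_Ioc]
      norm_num
    rwa [hv, mul_one] at h1
  have hmono : (gaussianReal 0 1 (Set.Ioc (-t - 1) (-t))).toReal
      ≤ stdNormalCDF (-t) := by
    unfold stdNormalCDF
    exact ENNReal.toReal_mono (gaussian_meas_ne_top _)
      (measure_mono Set.Ioc_subset_Iic_self)
  calc c ≤ _ := hint
    _ = _ := hmeas.symm
    _ ≤ _ := hmono

lemma xlogq_pos {q : ℝ} {x : ℝ} (hx : 2 ≤ x) : 0 < x * Real.log x ^ q := by
  have hl : 0 < Real.log x := Real.log_pos (by linarith)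
  positivity

lemma xlogq_mono {q : ℝ} (hq : 0 ≤ q) {x y : ℝ} (hx : 2 ≤ x) (hxy : x ≤ y) :
    x * Real.log x ^ q ≤ y * Real.log y ^ q := by
  have hl : 0 < Real.log x := Real.log_pos (by linarith)
  refine mul_le_mul hxy ?_ (by positivity) (by linarith)
  exact Real.rpow_le_rpow hl.le (Real.log_le_log (by linarith) hxy) hq

lemma summable_logq {q : ℝ} (hq : 1 < q) :
    Summable (fun i : ℕ => 1 / (((i : ℝ) + 2) * Real.log ((i : ℝ) + 2) ^ q)) := by
  set F : ℕ → ℝ := fun n => 1 / (max (n : ℝ) 2 * Real.log (max (n : ℝ) 2) ^ q) with hF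
  have hFnn : ∀ n, 0 ≤ F n := fun n => by
    have := xlogq_pos (q := q) (le_max_right (n : ℝ) 2)
    positivity
  have hFmono : ∀ ⦃m n : ℕ⦄, 0 < m → m ≤ n → F n ≤ F m := by
    intro m n _ hmn
    refine one_div_le_one_div_of_le (xlogq_pos (le_max_right _ _)) ?_
    exact xlogq_mono (by linarith) (le_max_right _ _)
      (max_le_max (Nat.cast_le.2 hmn) le_rfl)
  have hsumF : Summable F := by
    rw [← summable_condensed_iff_of_nonneg hFnn hFmono]
    have hbase : Summable (fun k : ℕ => ((Real.log 2) ^ q)⁻¹ * (((k : ℝ) + 1) ^ q)⁻¹) := by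
      refine Summable.mul_left _ ?_
      exact ((summable_nat_add_iff 1).2 (Real.summable_nat_rpow_inv.2 hq)).congr
        fun n => by push_cast; ring
    refine (summable_nat_add_iff 1).1 ?_
    refine hbase.congr fun k => ?_
    have h2k : (2 : ℝ) ≤ ((2 : ℕ) ^ (k + 1) : ℕ) := by
      push_cast
      calc (2:ℝ) = 2 ^ 1 := (pow_one 2).symm
      _ ≤ 2 ^ (k+1) := by
        exact pow_le_pow_right₀ one_le_two (Nat.le_add_left 1 k)
    have hmax : max (((2:ℕ) ^ (k + 1) : ℕ) : ℝ) 2 = (2:ℝ) ^ (k+1) := by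
      rw [max_eq_left (by exact_mod_cast h2k)]
      push_cast
      ring
    simp only [hF, hmax]
    rw [Real.log_pow]
    have hlog2 : 0 < Real.log 2 := Real.log_pos one_lt_two
    push_cast
    rw [show ((k:ℝ)+1) * Real.log 2 = Real.log 2 * ((k:ℝ)+1) by ring,
      Real.mul_rpow hlog2.le (by positivity)]
    have h2p : (0:ℝ) < 2 ^ (k+1) := by positivity
    have hkp : (0:ℝ) < ((k:ℝ)+1) ^ q := by positivity
    have hlq : (0:ℝ) < Real.log 2 ^ q := by positivity
    field_simp
  have := (summable_nat_add_iff 2).2 hsumF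
  refine this.congr fun i => ?_
  have : max ((i + 2 : ℕ) : ℝ) 2 = (i : ℝ) + 2 := by
    rw [max_eq_left (by push_cast; linarith)]
    push_cast; ring
  simp only [hF, this]

lemma zetaLog_pos {q : ℝ} (hq : 1 < q) : 0 < zetaLog q := by
  refine lt_of_lt_of_le ?_ (Summable.le_tsum (summable_logq hq) 0 fun j _ => by
    have := xlogq_pos (q := q) (by push_cast; linarith : (2:ℝ) ≤ (j:ℝ) + 2)
    positivity)
  have := xlogq_pos (q := q) (by norm_num : (2:ℝ) ≤ ((0:ℕ):ℝ) + 2)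
  positivity

lemma zetaLog_mul_ge {q : ℝ} (hq : 1 < q) (i : ℕ) :
    1 ≤ zetaLog q * (((i : ℝ) + 2) * Real.log ((i : ℝ) + 2) ^ q) := by
  have hp := xlogq_pos (q := q) (by push_cast; linarith : (2:ℝ) ≤ (i:ℝ) + 2)
  have hle : 1 / (((i : ℝ) + 2) * Real.log ((i : ℝ) + 2) ^ q) ≤ zetaLog q :=
    Summable.le_tsum (summable_logq hq) i fun j _ => by
      have := xlogq_pos (q := q) (by push_cast; linarith : (2:ℝ) ≤ (j:ℝ) + 2)
      positivity
  rw [div_le_iff₀ hp] at hle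
  linarith [hle]

lemma tendsto_sum_atTop_of_eventually_le {f g : ℕ → ℝ}
    (h : ∀ᶠ i in atTop, f i ≤ g i)
    (hf : Tendsto (fun n => ∑ i ∈ Finset.range n, f i) atTop atTop) :
    Tendsto (fun n => ∑ i ∈ Finset.range n, g i) atTop atTop := by
  obtain ⟨N, hN⟩ := eventually_atTop.1 h
  set Cst : ℝ := ∑ i ∈ Finset.range N, g i - ∑ i ∈ Finset.range N, f i with hCst
  refine tendsto_atTop_mono' atTop ?_ (tendsto_atTop_add_const_right atTop Cst hf)
  filter_upwards [eventually_ge_atTop N] with n hn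
  have hIco : ∑ i ∈ Finset.Ico N n, f i ≤ ∑ i ∈ Finset.Ico N n, g i :=
    Finset.sum_le_sum fun i hi => hN i (Finset.mem_Ico.1 hi).1
  rw [Finset.sum_Ico_eq_sub _ hn, Finset.sum_Ico_eq_sub _ hn] at hIco
  simp only [hCst]
  linarith

lemma tendsto_sum_half_harmonic {c : ℝ} (hc : 0 < c) :
    Tendsto (fun n => ∑ i ∈ Finset.range n, c / 2 * (1 / ((i : ℝ) + 1))) atTop atTop := by
  have h0 := Real.tendsto_sum_range_one_div_nat_succ_atTop
  have := h0.const_mul_atTop (half_pos hc)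
  refine this.congr fun n => ?_
  rw [Finset.mul_sum]

/-- For every `q > 1`, `C > 0` and `α ∈ (0,1)`, the series
`∑_{i=2}^∞ (1/(i (log i)^q)) · exp(−C·Φ⁻¹(α/(ζ_l(q) i (log i)^q))) · log(log i)`
diverges to `+∞`. -/
theorem log_q_series_exp_quantile_diverges
    (q C α : ℝ) (hq : 1 < q) (hC : 0 < C) (hα : α ∈ Set.Ioo (0 : ℝ) 1) :
    Tendsto (fun n : ℕ => ∑ i ∈ Finset.range n,
        1 / (((i : ℝ) + 2) * Real.log ((i : ℝ) + 2) ^ q) *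
          Real.exp (-C * stdNormalQuantile
            (α / (zetaLog q * (((i : ℝ) + 2) * Real.log ((i : ℝ) + 2) ^ q)))) *
          Real.log (Real.log ((i : ℝ) + 2)))
      atTop atTop := by
  obtain ⟨hα0, hα1⟩ := hα
  have hζ : 0 < zetaLog q := zetaLog_pos hq
  set ζ : ℝ := zetaLog q with hζdef
  set K : ℝ := (Real.sqrt (2 * Real.pi))⁻¹ with hKdef
  have hK : 0 < K := by
    have : (0:ℝ) < Real.sqrt (2 * Real.pi) := Real.sqrt_pos.2 (by positivity)
    exact inv_pos.2 this
  set s : ℝ := q / C with hsdef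
  have hs : 0 < s := div_pos (by linarith) hC
  set P : ℝ → ℝ := fun u => s ^ 2 / 2 * u ^ 2 + (s - q) * u
    + (1 / 2 + Real.log α - Real.log ζ - Real.log K) with hPdef
  have hP : ∀ᶠ u in atTop, P u ≤ Real.exp u := by
    have e2 : (fun u : ℝ => u ^ 2) =o[atTop] Real.exp := Real.isLittleO_pow_exp_atTop
    have e1 : (fun u : ℝ => u) =o[atTop] Real.exp := by
      have := Real.isLittleO_pow_exp_atTop (n := 1)
      simpa using this
    have e0 : (fun _ : ℝ => (1:ℝ)) =o[atTop] Real.exp := by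
      have := Real.isLittleO_pow_exp_atTop (n := 0)
      simpa using this
    have hPo : P =o[atTop] Real.exp := by
      have h := ((e2.const_mul_left (s ^ 2 / 2)).add (e1.const_mul_left (s - q))).add
        (e0.const_mul_left (1 / 2 + Real.log α - Real.log ζ - Real.log K))
      refine h.congr' (by filter_upwards with u; simp [hPdef]) (by rfl)
    filter_upwards [Asymptotics.isLittleO_iff.1 hPo one_pos] with u hu
    calc P u ≤ |P u| := le_abs_self _
      _ ≤ 1 * |Real.exp u| := by simpa [Real.norm_eq_abs] using hu
      _ = Real.exp u := by rw [one_mul, abs_of_pos (Real.exp_pos u)]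
  have hx_t : Tendsto (fun i : ℕ => (i : ℝ) + 2) atTop atTop :=
    tendsto_atTop_add_const_right atTop 2 tendsto_natCast_atTop_atTop
  have hu_t : Tendsto (fun i : ℕ => Real.log (Real.log ((i : ℝ) + 2))) atTop atTop :=
    Real.tendsto_log_atTop.comp (Real.tendsto_log_atTop.comp hx_t)
  have hlog3 : (1:ℝ) < Real.log 3 := by
    rw [Real.lt_log_iff_exp_lt (by norm_num)]
    exact lt_of_lt_of_le Real.exp_one_lt_d9 (by norm_num)
  have c_pos : 0 < Real.log (Real.log 3) := Real.log_pos hlog3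
  set c : ℝ := Real.log (Real.log 3) with hcdef
  refine tendsto_sum_atTop_of_eventually_le ?_ (tendsto_sum_half_harmonic c_pos)
  filter_upwards [eventually_ge_atTop 1, hu_t.eventually hP] with i hi1 hPi
  set x : ℝ := (i : ℝ) + 2 with hxdef
  have hx3 : (3:ℝ) ≤ x := by
    simp only [hxdef]
    have : (1:ℝ) ≤ (i:ℝ) := by exact_mod_cast hi1
    linarith
  have hx0 : (0:ℝ) < x := by linarith
  set L : ℝ := Real.log x with hLdef
  have hL1 : 1 < L := lt_of_lt_of_le hlog3 (Real.log_le_log (by norm_num) hx3)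
  have hL0 : 0 < L := by linarith
  set u : ℝ := Real.log L with hudef
  have hcu : c ≤ u := Real.log_le_log (by linarith) (Real.log_le_log (by norm_num) hx3)
  have hu0 : 0 < u := lt_of_lt_of_le c_pos hcu
  have hexpu : Real.exp u = L := Real.exp_log hL0
  set t : ℝ := s * u with htdef
  have ht0 : 0 ≤ t := le_of_lt (mul_pos hs hu0)
  have hLq : 0 < L ^ q := Real.rpow_pos_of_pos hL0 q
  have hxLq : 0 < x * L ^ q := mul_pos hx0 hLq
  set a : ℝ := α / (ζ * (x * L ^ q)) with hadef
  have ha0 : 0 < a := div_pos hα0 (mul_pos hζ hxLq)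
  have hkey : a ≤ stdNormalCDF (-t) := by
    have hB0 : 0 < K * Real.exp (-(t + 1) ^ 2 / 2) := mul_pos hK (Real.exp_pos _)
    have hlog : Real.log a ≤ Real.log (K * Real.exp (-(t + 1) ^ 2 / 2)) := by
      have hla : Real.log a = Real.log α - (Real.log ζ + (Real.log x + q * u)) := by
        rw [hadef, Real.log_div hα0.ne' (mul_pos hζ hxLq).ne',
          Real.log_mul hζ.ne' hxLq.ne', Real.log_mul hx0.ne' hLq.ne',
          Real.log_rpow hL0]
      have hlb : Real.log (K * Real.exp (-(t + 1) ^ 2 / 2))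
          = Real.log K + (-(t + 1) ^ 2 / 2) := by
        rw [Real.log_mul hK.ne' (Real.exp_ne_zero _), Real.log_exp]
      rw [hla, hlb]
      have hlx : P u ≤ Real.log x := by rw [← hLdef, ← hexpu]; exact hPi
      simp only [hPdef] at hlx
      have hexpand : (s * u + 1) ^ 2 / 2 = s ^ 2 / 2 * u ^ 2 + s * u + 1 / 2 := by ring
      rw [htdef]
      nlinarith [hlx]
    calc a = Real.exp (Real.log a) := (Real.exp_log ha0).symm
      _ ≤ Real.exp (Real.log (K * Real.exp (-(t + 1) ^ 2 / 2))) := Real.exp_le_exp.2 hlog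
      _ = K * Real.exp (-(t + 1) ^ 2 / 2) := Real.exp_log hB0
      _ ≤ stdNormalCDF (-t) := stdNormalCDF_neg_ge ht0
  have hquant : stdNormalQuantile a ≤ -t := stdNormalQuantile_le ha0 hkey
  have hexp : L ^ q ≤ Real.exp (-C * stdNormalQuantile a) := by
    have harg : q * u ≤ -C * stdNormalQuantile a := by
      have h1 : C * stdNormalQuantile a ≤ C * (-t) :=
        mul_le_mul_of_nonneg_left hquant hC.le
      have h2 : C * t = q * u := by
        simp only [htdef, hsdef]
        field_simp
      have h3 : C * (-t) = -(C * t) := by ring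
      have h4 : -C * stdNormalQuantile a = -(C * stdNormalQuantile a) := by ring
      rw [h4, ← h2]
      linarith
    calc L ^ q = Real.exp (Real.log L * q) := Real.rpow_def_of_pos hL0 q
      _ = Real.exp (q * u) := by rw [hudef, mul_comm]
      _ ≤ _ := Real.exp_le_exp.2 harg
  have step1 : 1 / x ≤ 1 / (x * L ^ q) * Real.exp (-C * stdNormalQuantile a) := by
    have h6 : 1 / (x * L ^ q) * L ^ q = 1 / x := by
      field_simp
    rw [← h6]
    exact mul_le_mul_of_nonneg_left hexp (le_of_lt (by positivity))
  have step2 : 1 / x * c ≤ 1 / (x * L ^ q) * Real.exp (-C * stdNormalQuantile a) * u :=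
    mul_le_mul step1 hcu c_pos.le
      (le_trans (by positivity) step1)
  refine le_trans ?_ step2
  have hx2 : x ≤ 2 * ((i:ℝ) + 1) := by
    simp only [hxdef]; push_cast; linarith
  have h7 : c / 2 * (1 / ((i:ℝ) + 1)) = c / (2 * ((i:ℝ) + 1)) := by
    field_simp
  have h8 : 1 / x * c = c / x := by ring
  rw [h7, h8]
  have hi0 : (0:ℝ) < (i:ℝ) + 1 := by positivity
  exact div_le_div_of_nonneg_left c_pos.le hx0 hx2
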